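/- Let K be a field of characteristic zero, let q ∈ K[X] be nonzero with deg(q) ≤ d, and let M ∈ M_n(K(X)) be such that qM has polynomial entries of degree at most d. Let u ∈ K[X]^n be a row vector with polynomial entries, and suppose that P = Δ_n(u) (the matrix with rows u, δ(u), ..., δ^{n−1}(u)) is invertible. Then every entry of the row vector δ^n(u)·P⁻¹ (the last row of the companion matrix gauge-similar to M produced by the cyclic-vector method) has degree, as a rational function, at most n·deg(u) + n(n+1)d/2. -/

import Mathlib

/-- `δ(u) = u M + u′` for a row vector `u`, the derivation `der` being applied
entrywise. -/
def cvDelta {F : Type*} [Field F] {n : ℕ} (der : F → F)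
    (M : Matrix (Fin n) (Fin n) F) (u : Fin n → F) : Fin n → F :=
  Matrix.vecMul u M + fun i => der (u i)

/-- `Δₙ(u)`: the `n × n` matrix whose rows are `u, δ(u), …, δ^{n−1}(u)`. -/
def cvDeltaMat {F : Type*} [Field F] {n : ℕ} (der : F → F)
    (M : Matrix (Fin n) (Fin n) F) (u : Fin n → F) : Matrix (Fin n) (Fin n) F :=
  Matrix.of fun i j => (cvDelta der M)^[(i : ℕ)] u j

/-- The degree of a rational function: the maximum of the degrees of its
numerator and denominator written in lowest terms. -/
noncomputable def ratFuncDeg {K : Type*} [Field K] (f : RatFunc K) : ℕ :=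
  max f.num.natDegree f.denom.natDegree

section Aux

variable {K : Type*} [Field K]

lemma cv_der_algebraMap (der : RatFunc K → RatFunc K)
    (h_add : ∀ a b : RatFunc K, der (a + b) = der a + der b)
    (h_mul : ∀ a b : RatFunc K, der (a * b) = a * der b + der a * b)
    (h_X : der RatFunc.X = 1)
    (h_C : ∀ c : K, der (RatFunc.C c) = 0) (p : Polynomial K) :
    der (algebraMap (Polynomial K) (RatFunc K) p)
      = algebraMap (Polynomial K) (RatFunc K) p.derivative := by
  induction p using Polynomial.induction_on with
  | C c => rw [RatFunc.algebraMap_C, h_C, Polynomial.derivative_C, map_zero]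
  | add p q hp hq => rw [map_add, h_add, hp, hq, Polynomial.derivative_add, map_add]
  | monomial m c ih =>
      have : (Polynomial.C c * Polynomial.X ^ (m + 1))
          = (Polynomial.C c * Polynomial.X ^ m) * Polynomial.X := by ring
      rw [this, map_mul, h_mul, ih, RatFunc.algebraMap_X, h_X, mul_one,
        ← RatFunc.algebraMap_X, ← map_mul, ← map_add]
      congr 1
      simp [Polynomial.derivative_mul]
      ring

lemma cv_ratFuncDeg_le {f : RatFunc K} {a b : Polynomial K} (hb : b ≠ 0)
    (h : f * algebraMap (Polynomial K) (RatFunc K) b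
        = algebraMap (Polynomial K) (RatFunc K) a) :
    ratFuncDeg f ≤ max a.natDegree b.natDegree := by
  have hb' : algebraMap (Polynomial K) (RatFunc K) b ≠ 0 := RatFunc.algebraMap_ne_zero hb
  have hf : f = algebraMap (Polynomial K) (RatFunc K) a
      / algebraMap (Polynomial K) (RatFunc K) b := by
    rw [eq_div_iff hb', h]
  by_cases ha : a = 0
  · subst ha
    rw [map_zero] at h
    have hf0 : f = 0 := by
      rcases mul_eq_zero.mp h with h' | h'
      · exact h'
      · exact absurd h' hb'
    simp [hf0, ratFuncDeg]
  · have h1 : f.num ∣ a := hf ▸ RatFunc.num_div_dvd a hb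
    have h2 : f.denom ∣ b := hf ▸ RatFunc.denom_div_dvd a b
    exact max_le_max (Polynomial.natDegree_le_of_dvd h1 ha)
      (Polynomial.natDegree_le_of_dvd h2 hb)

lemma cv_natDegree_det_le {m : ℕ} (A : Matrix (Fin m) (Fin m) (Polynomial K))
    (r : Fin m → ℕ) (h : ∀ i j, (A i j).natDegree ≤ r i) :
    A.det.natDegree ≤ ∑ i, r i := by
  rw [Matrix.det_apply]
  refine Polynomial.natDegree_sum_le_of_forall_le _ _ ?_
  intro σ _
  rw [Units.smul_def, zsmul_eq_mul]
  refine (Polynomial.natDegree_mul_le).trans ?_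
  rw [Polynomial.natDegree_intCast, zero_add]
  calc (∏ i, A (σ i) i).natDegree ≤ ∑ i, (A (σ i) i).natDegree :=
        Polynomial.natDegree_prod_le _ _
    _ ≤ ∑ i, r (σ i) := Finset.sum_le_sum fun i _ => h (σ i) i
    _ = ∑ i, r i := Equiv.sum_comp σ r

lemma cv_rep {n : ℕ} (der : RatFunc K → RatFunc K)
    (h_add : ∀ a b : RatFunc K, der (a + b) = der a + der b)
    (h_mul : ∀ a b : RatFunc K, der (a * b) = a * der b + der a * b)
    (h_X : der RatFunc.X = 1)
    (h_C : ∀ c : K, der (RatFunc.C c) = 0)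
    (q : Polynomial K) {d D : ℕ} (hqd : q.natDegree ≤ d)
    (M : Matrix (Fin n) (Fin n) (RatFunc K))
    (pm : Fin n → Fin n → Polynomial K)
    (hpm : ∀ i j, (pm i j).natDegree ≤ d)
    (hpm2 : ∀ i j, algebraMap (Polynomial K) (RatFunc K) q * M i j
        = algebraMap (Polynomial K) (RatFunc K) (pm i j))
    (u : Fin n → Polynomial K) (hu : ∀ l, (u l).natDegree ≤ D) (k : ℕ) :
    ∃ v : Fin n → Polynomial K, (∀ j, (v j).natDegree ≤ D + k * d) ∧
      ∀ j, (algebraMap (Polynomial K) (RatFunc K) q) ^ k *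
          ((cvDelta der M)^[k] (fun l => algebraMap (Polynomial K) (RatFunc K) (u l)) j)
        = algebraMap (Polynomial K) (RatFunc K) (v j) := by
  set A := algebraMap (Polynomial K) (RatFunc K) with hA
  have hder := cv_der_algebraMap der h_add h_mul h_X h_C
  have hq' : q.derivative.natDegree ≤ d :=
    (Polynomial.natDegree_derivative_le q).trans ((Nat.sub_le _ _).trans hqd)
  induction k with
  | zero => exact ⟨u, fun j => by simpa using hu j, fun j => by simp⟩
  | succ k ih =>
    obtain ⟨v, hdeg, hrep⟩ := ih
    set a := (cvDelta der M)^[k] (fun l => A (u l)) with ha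
    refine ⟨fun j => (∑ i, v i * pm i j) + q * (v j).derivative
      - (k : Polynomial K) * q.derivative * v j, fun j => ?_, fun j => ?_⟩
    · have h1 : (∑ i, v i * pm i j).natDegree ≤ D + k * d + d :=
        Polynomial.natDegree_sum_le_of_forall_le _ _ fun i _ =>
          (Polynomial.natDegree_mul_le).trans (add_le_add (hdeg i) (hpm i j))
      have h2 : (q * (v j).derivative).natDegree ≤ D + k * d + d := by
        refine (Polynomial.natDegree_mul_le).trans ?_
        have := (Polynomial.natDegree_derivative_le (v j)).trans
          ((Nat.sub_le _ _).trans (hdeg j))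
        omega
      have h3 : ((k : Polynomial K) * q.derivative * v j).natDegree ≤ D + k * d + d := by
        refine (Polynomial.natDegree_mul_le).trans ?_
        have h4 : ((k : Polynomial K) * q.derivative).natDegree ≤ d := by
          refine (Polynomial.natDegree_mul_le).trans ?_
          rw [Polynomial.natDegree_natCast, zero_add]
          exact hq'
        have := hdeg j
        omega
      have h5 := (Polynomial.natDegree_sub_le _ _).trans
        (max_le ((Polynomial.natDegree_add_le _ _).trans (max_le h1 h2)) h3)
      calc _ ≤ D + k * d + d := h5
        _ = D + (k+1) * d := by ring
    · have hstep : (cvDelta der M)^[k+1] (fun l => A (u l)) j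
          = (∑ i, a i * M i j) + der (a j) := by
        rw [Function.iterate_succ_apply']
        simp [cvDelta, Matrix.vecMul, dotProduct, ← ha]
      have e1 : ∀ i, A q ^ k * a i = A (v i) := hrep
      have e2 : der (A (v j)) = A ((v j).derivative) := hder _
      have e3 : der (A q ^ k * a j) = A q ^ k * der (a j) + der (A q ^ k) * a j := h_mul _ _
      have e4 : der (A q ^ k) = A ((q ^ k).derivative) := by rw [← map_pow]; exact hder _
      rw [e1 j] at e3
      rw [e2, e4] at e3
      have e5 : q * (q ^ k).derivative = (k : Polynomial K) * q.derivative * q ^ k := by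
        cases k with
        | zero => simp
        | succ l =>
          rw [Polynomial.derivative_pow, Nat.succ_sub_one]
          push_cast
          rw [map_add, Polynomial.C_1, Polynomial.C_eq_natCast]
          ring
      have e5A : A q * A ((q ^ k).derivative)
          = A ((k : Polynomial K) * q.derivative) * A q ^ k := by
        rw [← map_mul, e5, map_mul, map_pow]
      have E2 : A q ^ (k + 1) * der (a j)
          = A (q * (v j).derivative) - A ((k : Polynomial K) * q.derivative * v j) := by
        rw [map_mul (f := A), map_mul (f := A)]
        have h := congrArg (fun x => A q * x) e3
        simp only [mul_add, ← mul_assoc] at h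
        rw [pow_succ]
        calc A q ^ k * A q * der (a j)
            = A q * A ((v j).derivative) - (A q * A ((q ^ k).derivative)) * a j := by
              linear_combination -h
          _ = A q * A ((v j).derivative)
              - A ((k : Polynomial K) * q.derivative) * A (v j) := by
              rw [e5A, mul_assoc, e1 j]
          _ = _ := by ring
      have hsum : A q ^ (k + 1) * (∑ i, a i * M i j) = A (∑ i, v i * pm i j) := by
        rw [Finset.mul_sum, map_sum]
        refine Finset.sum_congr rfl fun i _ => ?_
        rw [map_mul, ← hpm2 i j, ← e1 i]
        ring
      rw [hstep, mul_add, hsum, E2, map_sub, map_add]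
      ring

end Aux

set_option synthInstance.maxHeartbeats 1000000 in
/-- Degree bound for the last row `δⁿ(u)·P⁻¹` of the companion matrix produced
by the cyclic-vector method: each entry has degree at most
`n·deg u + n(n+1)d/2`. -/
theorem cyclic_vector_companion_row_degree_bound {K : Type*} [Field K] [CharZero K]
    {n : ℕ}
    (der : RatFunc K → RatFunc K)
    (h_add : ∀ a b : RatFunc K, der (a + b) = der a + der b)
    (h_mul : ∀ a b : RatFunc K, der (a * b) = a * der b + der a * b)
    (h_X : der RatFunc.X = 1)
    (h_C : ∀ c : K, der (RatFunc.C c) = 0)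
    (q : Polynomial K) (hq : q ≠ 0) (d : ℕ) (hqd : q.degree ≤ (d : WithBot ℕ))
    (M : Matrix (Fin n) (Fin n) (RatFunc K))
    (hM : ∀ i j : Fin n, ∃ p : Polynomial K, p.degree ≤ (d : WithBot ℕ) ∧
      algebraMap (Polynomial K) (RatFunc K) q * M i j
        = algebraMap (Polynomial K) (RatFunc K) p)
    (u : Fin n → Polynomial K)
    (hP : IsUnit (cvDeltaMat der M (fun l => algebraMap (Polynomial K) (RatFunc K) (u l))).det) :
    ∀ j : Fin n,
      ratFuncDeg (Matrix.vecMul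
          ((cvDelta der M)^[n] (fun l => algebraMap (Polynomial K) (RatFunc K) (u l)))
          (cvDeltaMat der M (fun l => algebraMap (Polynomial K) (RatFunc K) (u l)))⁻¹ j)
        ≤ n * (Finset.univ.sup fun l => (u l).natDegree) + n * (n + 1) / 2 * d := by
  intro j0
  classical
  set A := algebraMap (Polynomial K) (RatFunc K) with hA
  set U : Fin n → RatFunc K := fun l => A (u l) with hU
  set P := cvDeltaMat der M U with hPdef
  set D := Finset.univ.sup fun l => (u l).natDegree with hD
  set w := (cvDelta der M)^[n] U with hw
  choose pm hpmdeg hpm2 using hM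
  have hqd' : q.natDegree ≤ d := Polynomial.natDegree_le_iff_degree_le.mpr hqd
  have hpmdeg' : ∀ i j, (pm i j).natDegree ≤ d := fun i j =>
    Polynomial.natDegree_le_iff_degree_le.mpr (hpmdeg i j)
  have hu : ∀ l, (u l).natDegree ≤ D := fun l =>
    Finset.le_sup (f := fun l => (u l).natDegree) (Finset.mem_univ l)
  choose vv hvdeg hvrep using
    cv_rep der h_add h_mul h_X h_C q hqd' M pm hpmdeg' hpm2 u hu
  -- Cramer identity
  have hdet_ne : P.det ≠ 0 := hP.ne_zero
  set x := Matrix.vecMul w P⁻¹ with hx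
  have hxP : Matrix.vecMul x P = w := by
    rw [hx, Matrix.vecMul_vecMul, Matrix.nonsing_inv_mul P hP, Matrix.vecMul_one]
  have hkey : x j0 * P.det = (P.updateRow j0 w).det := by
    have hw' : w = ∑ i, x i • P i := by
      funext j
      rw [← hxP]
      rw [Finset.sum_apply]
      simp only [Pi.smul_apply, smul_eq_mul]
      simp [Matrix.vecMul, dotProduct]
    rw [hw', Matrix.det_updateRow_sum, smul_eq_mul]
  -- exponents
  set T := ∑ i : Fin n, (i : ℕ) with hT
  set R := ∑ i ∈ Finset.univ.erase j0, (i : ℕ) with hR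
  have hTR : (j0 : ℕ) + R = T := Finset.add_sum_erase Finset.univ (fun i : Fin n => (i : ℕ)) (Finset.mem_univ j0)
  set e : Fin n → ℕ := fun i => if i = j0 then n else (i : ℕ) with he
  have hsume : ∑ i, e i = n + R := by
    rw [← Finset.add_sum_erase _ e (Finset.mem_univ j0)]
    congr 1
    · simp [he]
    · exact Finset.sum_congr rfl fun i hi => by
        simp [he, Finset.ne_of_mem_erase hi]
  -- scaled determinants
  set Vmat : Matrix (Fin n) (Fin n) (Polynomial K) := Matrix.of fun i j => vv (i : ℕ) j
    with hVmat
  set Wmat : Matrix (Fin n) (Fin n) (Polynomial K) := Matrix.of fun i j => vv (e i) j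
    with hWmat
  have hdetV : A Vmat.det = A q ^ T * P.det := by
    rw [RingHom.map_det, RingHom.mapMatrix_apply]
    have : Vmat.map A = Matrix.of fun (i j : Fin n) => (A q ^ (i : ℕ)) * P i j := by
      ext i j
      simp only [Matrix.map_apply, Matrix.of_apply, hVmat]
      exact (hvrep (i : ℕ) j).symm
    rw [this, Matrix.det_mul_column, Finset.prod_pow_eq_pow_sum]
  have hdetW : A Wmat.det = A q ^ (n + R) * (P.updateRow j0 w).det := by
    rw [RingHom.map_det, RingHom.mapMatrix_apply]
    have : Wmat.map A = Matrix.of fun (i j : Fin n) => (A q ^ e i) * (P.updateRow j0 w) i j := by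
      ext i j
      simp only [Matrix.map_apply, Matrix.of_apply, hWmat]
      by_cases hi : i = j0
      · subst hi
        rw [Matrix.updateRow_self]
        simp only [he, if_pos rfl]
        exact (hvrep n j).symm
      · rw [Matrix.updateRow_ne hi]
        simp only [he, if_neg hi]
        exact (hvrep (i : ℕ) j).symm
    rw [this, Matrix.det_mul_column, Finset.prod_pow_eq_pow_sum, hsume]
  -- main identity
  have hmain : x j0 * A (q ^ n * Vmat.det) = A (q ^ (j0 : ℕ) * Wmat.det) := by
    rw [map_mul, map_mul, map_pow, map_pow, hdetV, hdetW]
    have hexp : A q ^ n * A q ^ T = A q ^ (j0 : ℕ) * A q ^ (n + R) := by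
      rw [← pow_add, ← pow_add, ← hTR]
      congr 1
      omega
    calc x j0 * (A q ^ n * (A q ^ T * P.det))
        = (A q ^ n * A q ^ T) * (x j0 * P.det) := by ring
      _ = (A q ^ (j0 : ℕ) * A q ^ (n + R)) * (P.updateRow j0 w).det := by rw [hexp, hkey]
      _ = A q ^ (j0 : ℕ) * (A q ^ (n + R) * (P.updateRow j0 w).det) := by ring
  -- nonvanishing of the denominator
  have hAq : A q ≠ 0 := RatFunc.algebraMap_ne_zero hq
  have hB0 : q ^ n * Vmat.det ≠ 0 := by
    intro h0
    have h1 : A (q ^ n * Vmat.det) = 0 := by rw [h0, map_zero]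
    rw [map_mul, map_pow, hdetV] at h1
    rcases mul_eq_zero.mp h1 with h' | h'
    · exact pow_ne_zero n hAq h'
    · rcases mul_eq_zero.mp h' with h'' | h''
      · exact pow_ne_zero T hAq h''
      · exact hdet_ne h''
  -- degree bounds
  have hdegV : Vmat.det.natDegree ≤ n * D + T * d := by
    have := cv_natDegree_det_le Vmat (fun i => D + (i : ℕ) * d)
      (fun i j => hvdeg (i : ℕ) j)
    refine this.trans ?_
    rw [Finset.sum_add_distrib, Finset.sum_const, ← Finset.sum_mul, Finset.card_univ,
      Fintype.card_fin, smul_eq_mul]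
  have hdegW : Wmat.det.natDegree ≤ n * D + (n + R) * d := by
    have := cv_natDegree_det_le Wmat (fun i => D + e i * d)
      (fun i j => hvdeg (e i) j)
    refine this.trans ?_
    rw [Finset.sum_add_distrib, Finset.sum_const, ← Finset.sum_mul, Finset.card_univ,
      Fintype.card_fin, smul_eq_mul, hsume]
  have hdega : (q ^ (j0 : ℕ) * Wmat.det).natDegree ≤ n * D + (n + T) * d := by
    refine (Polynomial.natDegree_mul_le).trans ?_
    have h1 : (q ^ (j0 : ℕ)).natDegree ≤ (j0 : ℕ) * d :=
      (Polynomial.natDegree_pow_le).trans (Nat.mul_le_mul_left _ hqd')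
    have h2 : n * D + (n + T) * d = (j0 : ℕ) * d + (n * D + (n + R) * d) := by
      rw [← hTR]; ring
    rw [h2]
    exact add_le_add h1 hdegW
  have hdegb : (q ^ n * Vmat.det).natDegree ≤ n * D + (n + T) * d := by
    refine (Polynomial.natDegree_mul_le).trans ?_
    have h1 : (q ^ n).natDegree ≤ n * d :=
      (Polynomial.natDegree_pow_le).trans (Nat.mul_le_mul_left _ hqd')
    have h2 : n * D + (n + T) * d = n * d + (n * D + T * d) := by ring
    rw [h2]
    exact add_le_add h1 hdegV
  -- Gauss sum
  have hnT : n * (n + 1) / 2 = n + T := by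
    have hT2 : T * 2 = n * (n - 1) := by
      rw [hT, Fin.sum_univ_eq_sum_range (fun i => i) n]
      exact Finset.sum_range_id_mul_two n
    refine Nat.div_eq_of_eq_mul_left (by norm_num) ?_
    cases n with
    | zero => simp at hT2 ⊢; omega
    | succ m =>
      have : T * 2 = (m + 1) * m := by simpa using hT2
      ring_nf
      ring_nf at this
      omega
  refine (cv_ratFuncDeg_le hB0 hmain).trans ?_
  rw [hnT]
  have : n + T ≤ n + T := le_refl _
  calc max (q ^ (j0 : ℕ) * Wmat.det).natDegree (q ^ n * Vmat.det).natDegree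
      ≤ n * D + (n + T) * d := max_le hdega hdegb
    _ = n * D + (n + T) * d := rfl
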